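/- Let q₀ ≥ q₁ ≥ ⋯ ≥ q_{n−1} be a nonincreasing sequence of reals and let m ≥ 1 with n ≥ 2m+1. Among all ways to append m real values to this sequence, the median of the resulting n+m values is maximized when all m appended values exceed q₀, and the maximum achievable median equals (q_{⌊(n−m−1)/2⌋} + q_{⌊(n−m)/2⌋})/2, where median of an even-length list is the average of the two middle order statistics and of an odd-length list is the middle order statistic. -/

import Mathlib

open Finset

theorem aux_sub : ∀ {l₁ l₂ : List ℝ}, List.Sublist l₁ l₂ → l₂.Pairwise (· ≤ ·) →
    ∀ i (h1 : i < l₁.length) (h2 : i < l₂.length), l₂[i] ≤ l₁[i] := by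
  intro l₁ l₂ h
  induction h with
  | slnil => intro _ i h1 _; simp at h1
  | @cons la lb a h ih =>
    intro hs i h1 h2
    match i with
    | 0 =>
      simp only [List.getElem_cons_zero]
      have hmem : la[0] ∈ lb := h.subset (la.getElem_mem h1)
      exact (List.pairwise_cons.mp hs).1 _ hmem
    | (j+1) =>
      simp only [List.getElem_cons_succ]
      have hlen := h.length_le
      have hbs := (List.pairwise_cons.mp hs).2
      have hj2 : j + 1 < lb.length := by omega
      have : lb[j] ≤ lb[j+1] :=
        hbs.rel_get_of_le (a := ⟨j, by omega⟩) (b := ⟨j+1, hj2⟩) (by simp)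
      exact this.trans (ih hbs (j+1) h1 hj2)
  | @cons_cons la lb a h ih =>
    intro hs i h1 h2
    match i with
    | 0 => simp
    | (j+1) =>
      simp only [List.getElem_cons_succ]
      exact ih (List.pairwise_cons.mp hs).2 j (by simpa using h1) (by simpa using h2)


/-- Median of a multiset of reals: average of the two middle order statistics
(equal to the middle one for odd cardinality). -/
noncomputable def med (s : Multiset ℝ) : ℝ :=
  ((s.sort (· ≤ ·)).getD ((Multiset.card s - 1) / 2) 0 +
    (s.sort (· ≤ ·)).getD (Multiset.card s / 2) 0) / 2

/-- `m`-trimmed mean: remove the `m` largest and `m` smallest values and average the rest. -/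
noncomputable def trimmedMean (m : ℕ) (s : Multiset ℝ) : ℝ :=
  ((((s.sort (· ≤ ·)).drop m).take (Multiset.card s - 2 * m)).sum) /
    ((Multiset.card s : ℝ) - 2 * m)

/-- The multiset of the first `n` values of `q`. -/
noncomputable def qMs (n : ℕ) (q : ℕ → ℝ) : Multiset ℝ :=
  (Finset.range n).val.map q

theorem stmt5 (n m : ℕ) (hm : 1 ≤ m) (hn : 2 * m + 1 ≤ n) (q : ℕ → ℝ)
    (hq : ∀ i j, i ≤ j → j < n → q j ≤ q i) :
    (∀ t : Multiset ℝ, Multiset.card t = m →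
      med (qMs n q + t) ≤ (q ((n - m - 1) / 2) + q ((n - m) / 2)) / 2) ∧
    (∀ t : Multiset ℝ, Multiset.card t = m → (∀ x ∈ t, q 0 < x) →
      med (qMs n q + t) = (q ((n - m - 1) / 2) + q ((n - m) / 2)) / 2) := by
  have hcoe : qMs n q = ((List.range n).map q : List ℝ) := by
    simp [qMs, Finset.range_val, Multiset.range]
  set A : List ℝ := (qMs n q).sort (· ≤ ·) with hA
  have hAcoe : (A : Multiset ℝ) = qMs n q := Multiset.sort_eq _ _
  have hAlen : A.length = n := by simp [hA, hcoe]
  have hAsorted : A.Pairwise (· ≤ ·) := Multiset.pairwise_sort _ _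
  have hAeq : A = ((List.range n).map q).reverse := by
    refine (fun hp h1 h2 => List.Perm.eq_of_pairwise' (r := (· ≤ ·)) h1 h2 hp) ?_ ?_ ?_
    · refine (Multiset.coe_eq_coe.mp ?_).trans ((List.range n).map q).reverse_perm.symm
      rw [hAcoe, hcoe]
    · exact hAsorted
    · rw [List.pairwise_reverse, List.pairwise_iff_getElem]
      intro i j hi hj hij
      simp only [List.length_map, List.length_range] at hi hj
      simp only [List.getElem_map, List.getElem_range]
      exact hq i j hij.le hj
  have hAget : ∀ k, k < n → A.getD k 0 = q (n - 1 - k) := by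
    intro k hk
    rw [hAeq, List.getD_eq_getElem _ _ (by simp; omega), List.getElem_reverse]
    simp only [List.getElem_map, List.getElem_range, List.length_map, List.length_range]
  have hj1 : n - 1 - (n + m - 1) / 2 = (n - m) / 2 := by omega
  have hj2 : n - 1 - (n + m) / 2 = (n - m - 1) / 2 := by omega
  have hj1lt : (n + m - 1) / 2 < n := by omega
  have hj2lt : (n + m) / 2 < n := by omega
  constructor
  · intro t ht
    set L : List ℝ := ((qMs n q + t).sort (· ≤ ·)) with hL
    have hcard : Multiset.card (qMs n q + t) = n + m := by simp [hcoe, ht]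
    have hLlen : L.length = n + m := by simp [hL, hcard]
    have hsub : List.Sublist A L := by
      refine List.sublist_of_subperm_of_pairwise (r := (· ≤ ·)) ?_ hAsorted
        (Multiset.pairwise_sort _ _)
      apply Multiset.coe_le.mp
      rw [hAcoe, hL, Multiset.sort_eq]
      exact Multiset.le_add_right _ _
    have key : ∀ k, k < n → L.getD k 0 ≤ q (n - 1 - k) := by
      intro k hk
      rw [← hAget k hk, List.getD_eq_getElem _ _ (by omega),
        List.getD_eq_getElem _ _ (by omega)]
      exact aux_sub hsub (Multiset.pairwise_sort _ _) k (by omega) (by omega)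
    rw [med, hcard]
    have h1 := key ((n + m - 1) / 2) hj1lt
    have h2 := key ((n + m) / 2) hj2lt
    rw [hj1] at h1
    rw [hj2] at h2
    have : (n + m - 1) / 2 = (n + m - 1) / 2 := rfl
    linarith
  · intro t ht htq
    set T : List ℝ := t.sort (· ≤ ·) with hT
    have hcard : Multiset.card (qMs n q + t) = n + m := by simp [hcoe, ht]
    have hLeq : ((qMs n q + t).sort (· ≤ ·)) = A ++ T := by
      refine (fun hp h1 h2 => List.Perm.eq_of_pairwise' (r := (· ≤ ·)) h1 h2 hp) ?_ ?_ ?_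
      · apply Multiset.coe_eq_coe.mp
        rw [Multiset.sort_eq, ← Multiset.coe_add, hAcoe, hT, Multiset.sort_eq]
      · exact Multiset.pairwise_sort _ _
      · rw [List.pairwise_append]
        refine ⟨hAsorted, Multiset.pairwise_sort _ _, ?_⟩
        intro a ha b hb
        have ha' : a ∈ qMs n q := by rw [← hAcoe]; exact_mod_cast ha
        have hb' : b ∈ t := by rw [hT, Multiset.mem_sort] at hb; exact hb
        obtain ⟨i, hi, rfl⟩ := Multiset.mem_map.mp ha'
        have hi' : i < n := by simpa using hi
        exact le_of_lt (lt_of_le_of_lt (hq 0 i (Nat.zero_le _) hi') (htq b hb'))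
    have hget : ∀ k, k < n →
        ((qMs n q + t).sort (· ≤ ·)).getD k 0 = q (n - 1 - k) := by
      intro k hk
      rw [hLeq, List.getD_eq_getElem _ _ (by simp [hAlen]; omega),
        List.getElem_append_left (by omega), ← List.getD_eq_getElem A 0 (by omega)]
      exact hAget k hk
    rw [med, hcard, hget _ hj1lt, hget _ hj2lt, hj1, hj2]
    ring
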